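/- Let X > 0 and Y > 0 be symmetric matrices solving the edge-Lyapunov inequalities −L_e X − X L_eᵀ + RᵀFFᵀR ≤ 0 and −L_eᵀ Y − Y L_e + WRᵀFFᵀRW ≤ 0 for a tree edge Laplacian L_e = RᵀRW, and let K > 0 certify passivity of (A,B,C) (AᵀK + KA ≤ 0, Cᵀ = KB). Then P_e := X ⊗ K^{-1} satisfies the generalized controllability Gramian inequality (I⊗A − L_e⊗BC)P_e + P_e(I⊗A − L_e⊗BC)ᵀ + (RᵀF⊗B)(RᵀF⊗B)ᵀ ≤ 0. -/

import Mathlib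

open Matrix Kronecker

lemma kron_psd {a b : ℕ} {X : Matrix (Fin a) (Fin a) ℝ} {Y : Matrix (Fin b) (Fin b) ℝ}
    (hX : X.PosSemidef) (hY : Y.PosSemidef) : (X ⊗ₖ Y).PosSemidef := by
  exact hX.kronecker hY

/-- For a tree edge Laplacian `L_e = RᵀRW` and a passive agent `(A,B,C)` certified by
`K`, if `X > 0` solves `−L_e X − X L_eᵀ + RᵀFFᵀR ≤ 0` and `Y > 0` solves
`−L_eᵀY − YL_e + WRᵀFFᵀRW ≤ 0`, then `P_e = X ⊗ K⁻¹` is a generalized controllability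
Gramian of the edge system `(I⊗A − L_e⊗BC, RᵀF⊗B)`. -/
theorem edge_gramian {m n ℓ mm p : ℕ}
    (R : Matrix (Fin n) (Fin m) ℝ) (w : Fin m → ℝ) (hw : ∀ k, 0 < w k)
    (Le : Matrix (Fin m) (Fin m) ℝ)
    (hLe : Le = Rᵀ * R * Matrix.diagonal w)
    (hLeSpec : ∀ μ ∈ spectrum ℂ (Le.map Complex.ofReal), μ.im = 0 ∧ 0 < μ.re)
    (F : Matrix (Fin n) (Fin p) ℝ)
    (A : Matrix (Fin ℓ) (Fin ℓ) ℝ)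
    (B : Matrix (Fin ℓ) (Fin mm) ℝ) (C : Matrix (Fin mm) (Fin ℓ) ℝ)
    (K : Matrix (Fin ℓ) (Fin ℓ) ℝ)
    (hK : K.PosDef) (hKsym : Kᵀ = K)
    (hlyap : (-(Aᵀ * K + K * A)).PosSemidef)
    (hCB : Cᵀ = K * B)
    (X Y : Matrix (Fin m) (Fin m) ℝ)
    (hX : X.PosDef) (hXsym : Xᵀ = X)
    (hY : Y.PosDef) (hYsym : Yᵀ = Y)
    (hXineq : (Le * X + X * Leᵀ - Rᵀ * F * Fᵀ * R).PosSemidef)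
    (hYineq : (Leᵀ * Y + Y * Le
        - Matrix.diagonal w * Rᵀ * F * Fᵀ * R * Matrix.diagonal w).PosSemidef) :
    (-(((1 : Matrix (Fin m) (Fin m) ℝ) ⊗ₖ A - Le ⊗ₖ (B * C)) * (X ⊗ₖ K⁻¹)
        + (X ⊗ₖ K⁻¹) * ((1 : Matrix (Fin m) (Fin m) ℝ) ⊗ₖ A - Le ⊗ₖ (B * C))ᵀ
        + ((Rᵀ * F) ⊗ₖ B) * ((Rᵀ * F) ⊗ₖ B)ᵀ)).PosSemidef := by
  have hKdet : IsUnit K.det := isUnit_iff_ne_zero.mpr hK.det_pos.ne'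
  have hKinv : K * K⁻¹ = 1 := Matrix.mul_nonsing_inv K hKdet
  have hinvK : K⁻¹ * K = 1 := Matrix.nonsing_inv_mul K hKdet
  have hKinvsym : (K⁻¹)ᵀ = K⁻¹ := by rw [Matrix.transpose_nonsing_inv, hKsym]
  have hC : C = Bᵀ * K := by
    have := congrArg Matrix.transpose hCB
    simpa [Matrix.transpose_mul, hKsym] using this
  -- key component identities
  have hBCKinv : B * C * K⁻¹ = B * Bᵀ := by
    rw [hC]; rw [Matrix.mul_assoc, Matrix.mul_assoc, hKinv, Matrix.mul_one]
  have hKinvBCT : K⁻¹ * (B * C)ᵀ = B * Bᵀ := by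
    rw [Matrix.transpose_mul, hCB, ← Matrix.mul_assoc, ← Matrix.mul_assoc, hinvK,
      Matrix.one_mul]
  set S : Matrix (Fin ℓ) (Fin ℓ) ℝ := K⁻¹ * (-(Aᵀ * K + K * A)) * K⁻¹ with hSdef
  have hSval : S = -(A * K⁻¹ + K⁻¹ * Aᵀ) := by
    rw [hSdef, mul_neg, neg_mul]
    congr 1
    rw [Matrix.mul_add, Matrix.add_mul]
    have h1 : K⁻¹ * (Aᵀ * K) * K⁻¹ = K⁻¹ * Aᵀ := by
      rw [Matrix.mul_assoc, Matrix.mul_assoc, hKinv, Matrix.mul_one]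
    have h2 : K⁻¹ * (K * A) * K⁻¹ = A * K⁻¹ := by
      rw [← Matrix.mul_assoc, hinvK, Matrix.one_mul]
    rw [h1, h2, add_comm]
  set Q : Matrix (Fin m) (Fin m) ℝ := Le * X + X * Leᵀ - Rᵀ * F * Fᵀ * R with hQdef
  have key : -(((1 : Matrix (Fin m) (Fin m) ℝ) ⊗ₖ A - Le ⊗ₖ (B * C)) * (X ⊗ₖ K⁻¹)
        + (X ⊗ₖ K⁻¹) * ((1 : Matrix (Fin m) (Fin m) ℝ) ⊗ₖ A - Le ⊗ₖ (B * C))ᵀ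
        + ((Rᵀ * F) ⊗ₖ B) * ((Rᵀ * F) ⊗ₖ B)ᵀ)
      = X ⊗ₖ S + Q ⊗ₖ (B * Bᵀ) := by
    have ht1 : ((1 : Matrix (Fin m) (Fin m) ℝ) ⊗ₖ A - Le ⊗ₖ (B * C))ᵀ
        = (1 : Matrix (Fin m) (Fin m) ℝ) ⊗ₖ Aᵀ - Leᵀ ⊗ₖ (B * C)ᵀ := by
      rw [Matrix.transpose_sub, ← Matrix.kroneckerMap_transpose, ← Matrix.kroneckerMap_transpose,
        Matrix.transpose_one]
    have ht2 : ((Rᵀ * F) ⊗ₖ B)ᵀ = (Rᵀ * F)ᵀ ⊗ₖ Bᵀ := (Matrix.kroneckerMap_transpose _ _ _).symm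
    rw [ht1, ht2, Matrix.sub_mul, Matrix.mul_sub,
      ← Matrix.mul_kronecker_mul, ← Matrix.mul_kronecker_mul, ← Matrix.mul_kronecker_mul,
      ← Matrix.mul_kronecker_mul, ← Matrix.mul_kronecker_mul,
      Matrix.one_mul, Matrix.mul_one, hBCKinv, hKinvBCT, hSval, hQdef]
    have hR : Rᵀ * F * (Rᵀ * F)ᵀ = Rᵀ * F * Fᵀ * R := by
      simp [Matrix.transpose_mul, Matrix.mul_assoc]
    rw [hR]
    ext ⟨i, k⟩ ⟨j, l⟩
    simp only [Matrix.neg_apply, Matrix.add_apply, Matrix.sub_apply, Matrix.kroneckerMap_apply]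
    ring
  rw [key]
  have hSps : S.PosSemidef := by
    have := hlyap.conjTranspose_mul_mul_same K⁻¹
    simpa [conjTranspose_eq_transpose_of_trivial, hKinvsym, hSdef] using this
  exact (kron_psd hX.posSemidef hSps).add (kron_psd hXineq (Matrix.posSemidef_self_mul_conjTranspose B))
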